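/- Let ρ be a rank function on a triangulated category C, and let X →f Y →g Z be an exact triangle with connecting morphism h : Σ⁻¹Z → X. Then: (a) ρ(f) = ρ(id_X) if and only if ρ(g) = ρ(id_Z) shifted appropriately, namely both are equivalent to ρ(h) = 0; and (b) f is ρ-full if and only if ρ(id_Z) = 0. -/

import Mathlib

open CategoryTheory CategoryTheory.Limits CategoryTheory.Pretriangulated

variable {C : Type*} [Category C] [Preadditive C] [HasZeroObject C]
  [HasShift C ℤ] [∀ n : ℤ, (CategoryTheory.shiftFunctor C n).Additive] [Pretriangulated C]
  [HasBinaryBiproducts C]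

theorem rho_neg_aux (ρ : ∀ ⦃X Y : C⦄, (X ⟶ Y) → ℝ)
    (hM3 : ∀ T ∈ distTriang C, ρ T.mor₁ + ρ T.mor₂ = ρ (𝟙 T.obj₂))
    {X Y : C} (v : X ⟶ Y) : ρ (-v) = ρ v := by
  obtain ⟨Z, g, h, hT⟩ := distinguished_cocone_triangle v
  have hT' : Triangle.mk (-v) g (-h) ∈ distTriang C := by
    refine isomorphic_distinguished _ hT _ ?_
    refine Triangle.isoMk _ _ (Iso.mk (-𝟙 X) (-𝟙 X) (by change (-𝟙 X) ≫ (-𝟙 X) = 𝟙 X; simp) (by change (-𝟙 X) ≫ (-𝟙 X) = 𝟙 X; simp))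
      (Iso.refl Y) (Iso.refl Z) (by change (-v) ≫ 𝟙 Y = (-𝟙 X) ≫ v; simp) (by change g ≫ 𝟙 Z = 𝟙 Y ≫ g; simp) ?_
    change (-h) ≫ (shiftFunctor C 1).map (-𝟙 X) = 𝟙 Z ≫ h; simp [Functor.map_neg]
  have h1 := hM3 _ hT
  have h2 := hM3 _ hT'
  change ρ v + ρ g = ρ (𝟙 Y) at h1
  change ρ (-v) + ρ g = ρ (𝟙 Y) at h2
  linarith

/-- in an exact triangle (X,Y,Z,f,g,h) with connecting morphism
(represented by mor₃, whose rank equals that of the connecting morphism Σ⁻¹Z ⟶ X by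
translation invariance): f is left ρ-full iff g is right ρ-full iff ρ(mor₃) = 0;
and f is ρ-full iff ρ(id Z) = 0. -/
theorem full_iff_connecting_rank_zero (ρ : ∀ ⦃X Y : C⦄, (X ⟶ Y) → ℝ)
    (hnonneg : ∀ ⦃X Y : C⦄ (f : X ⟶ Y), 0 ≤ ρ f)
    (hM1 : ∀ ⦃X Y : C⦄ (f : X ⟶ Y), ρ (f⟦(1 : ℤ)⟧') = ρ f)
    (hM2 : ∀ ⦃X Y X' Y' : C⦄ (f : X ⟶ Y) (g : X' ⟶ Y'),
      ρ (biprod.map f g) = ρ f + ρ g)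
    (hM3 : ∀ T ∈ distTriang C, ρ T.mor₁ + ρ T.mor₂ = ρ (𝟙 T.obj₂)) :
    ∀ T ∈ distTriang C,
      (ρ T.mor₁ = ρ (𝟙 T.obj₁) ↔ ρ T.mor₃ = 0) ∧
      (ρ T.mor₂ = ρ (𝟙 T.obj₃) ↔ ρ T.mor₃ = 0) ∧
      ((ρ T.mor₁ = ρ (𝟙 T.obj₁) ∧ ρ T.mor₁ = ρ (𝟙 T.obj₂)) ↔ ρ (𝟙 T.obj₃) = 0) := by
  intro T hT
  have A := hM3 T hT
  have B := hM3 _ (rot_of_distTriang _ hT)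
  have Cc := hM3 _ (rot_of_distTriang _ (rot_of_distTriang _ hT))
  change ρ T.mor₂ + ρ T.mor₃ = ρ (𝟙 T.obj₃) at B
  change ρ T.mor₃ + ρ (-(T.mor₁⟦(1 : ℤ)⟧')) = ρ (𝟙 ((shiftFunctor C (1 : ℤ)).obj T.obj₁)) at Cc
  rw [rho_neg_aux ρ hM3, hM1, ← (shiftFunctor C (1 : ℤ)).map_id, hM1] at Cc
  have n1 := hnonneg T.mor₁
  have n2 := hnonneg T.mor₂
  have n3 := hnonneg T.mor₃
  refine ⟨⟨fun h => by linarith, fun h => by linarith⟩,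
    ⟨fun h => by linarith, fun h => by linarith⟩,
    ⟨fun ⟨h1, h2⟩ => by linarith, fun h => ⟨by linarith, by linarith⟩⟩⟩
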